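/- One-step surrogate-loss inequality: Let C be closed convex with B(r) ⊆ C ⊆ B(R), 0 < r ≤ R. Fix g ∈ ℝ^d and w ∈ B(R). If γ_C(w) ≥ 1, set x := w/γ_C(w); otherwise x := w. Define the surrogate loss ℓ̃(v) := ⟨g, v⟩ − 𝟙[⟨g,w⟩<0]·⟨g,x⟩·S_C(v). Then x ∈ C and for every z ∈ C: ⟨g, x − z⟩ ≤ ℓ̃(w) − ℓ̃(z). -/
import Mathlib


open RealInnerProductSpace

/-- The Gauge distance to `C`: `S_C(v) = inf_{u ∈ C} γ_C(v − u)`. -/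
noncomputable def gaugeDist {d : ℕ} (C : Set (EuclideanSpace ℝ (Fin d)))
    (v : EuclideanSpace ℝ (Fin d)) : ℝ :=
  sInf ((fun u => gauge C (v - u)) '' C)

/-- One-step surrogate-loss inequality: let `C` be closed convex with
`B(r) ⊆ C ⊆ B(R)`, `0 < r ≤ R`. Fix `g` and `w ∈ B(R)`; set `x = w/γ_C(w)` if
`γ_C(w) ≥ 1` and `x = w` otherwise, and define the surrogate loss
`ℓ̃(v) = ⟪g, v⟫ − 𝟙[⟪g,w⟫<0]·⟪g,x⟫·S_C(v)`. Then `x ∈ C` and for every `z ∈ C`,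
`⟪g, x − z⟫ ≤ ℓ̃(w) − ℓ̃(z)`. -/
theorem surrogate_one_step {d : ℕ} (C : Set (EuclideanSpace ℝ (Fin d))) (r R : ℝ)
    (hr : 0 < r) (hrR : r ≤ R) (hclosed : IsClosed C) (hconv : Convex ℝ C)
    (hlow : Metric.closedBall 0 r ⊆ C) (hhigh : C ⊆ Metric.closedBall 0 R)
    (g w : EuclideanSpace ℝ (Fin d)) (hw : w ∈ Metric.closedBall 0 R)
    (x : EuclideanSpace ℝ (Fin d))
    (hx : x = if 1 ≤ gauge C w then (gauge C w)⁻¹ • w else w)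
    (ℓ : EuclideanSpace ℝ (Fin d) → ℝ)
    (hℓ : ∀ v, ℓ v = ⟪g, v⟫ - (if ⟪g, w⟫ < 0 then ⟪g, x⟫ else 0) * gaugeDist C v) :
    x ∈ C ∧ ∀ z ∈ C, ⟪g, x - z⟫ ≤ ℓ w - ℓ z := by
  have h0 : (0 : EuclideanSpace ℝ (Fin d)) ∈ C :=
    hlow (by simpa using hr.le)
  have hnhds : C ∈ nhds (0 : EuclideanSpace ℝ (Fin d)) :=
    Filter.mem_of_superset (Metric.closedBall_mem_nhds 0 hr) hlow
  have habs : Absorbent ℝ C := absorbent_nhds_zero hnhds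
  -- gaugeDist vanishes on C
  have hdist0 : ∀ z ∈ C, gaugeDist C z = 0 := by
    intro z hz
    have hmem : (0 : ℝ) ∈ (fun u => gauge C (z - u)) '' C :=
      ⟨z, hz, by simp [gauge_zero]⟩
    have hbdd : BddBelow ((fun u => gauge C (z - u)) '' C) :=
      ⟨0, fun a ⟨u, _, hu⟩ => hu ▸ gauge_nonneg _⟩
    refine le_antisymm (csInf_le hbdd hmem) ?_
    exact le_csInf ⟨0, hmem⟩ (fun b ⟨u, _, hu⟩ => hu ▸ gauge_nonneg _)
  -- lower bound on gaugeDist C w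
  have hlb : gauge C w - 1 ≤ gaugeDist C w := by
    refine le_csInf ⟨gauge C w, 0, h0, by simp [gauge_zero]⟩ ?_
    rintro b ⟨u, hu, rfl⟩
    have h1 : gauge C w ≤ gauge C (w - u) + gauge C u := by
      calc gauge C w = gauge C ((w - u) + u) := by rw [sub_add_cancel]
        _ ≤ gauge C (w - u) + gauge C u := gauge_add_le hconv habs _ _
    have h2 : gauge C u ≤ 1 := gauge_le_one_of_mem hu
    linarith
  -- membership of x
  have hxC : x ∈ C := by
    by_cases h : 1 ≤ gauge C w
    · rw [hx, if_pos h]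
      have hγpos : 0 < gauge C w := lt_of_lt_of_le one_pos h
      have : gauge C ((gauge C w)⁻¹ • w) = (gauge C w)⁻¹ * gauge C w := by
        rw [gauge_smul_of_nonneg (inv_nonneg.2 hγpos.le)]; rfl
      have hle1 : gauge C ((gauge C w)⁻¹ • w) ≤ 1 := by
        rw [this, inv_mul_cancel₀ hγpos.ne']
      have := (gauge_le_one_iff_mem_closure hconv hnhds).1 hle1
      rwa [hclosed.closure_eq] at this
    · rw [hx, if_neg h]
      exact gauge_lt_one_subset_self hconv h0 habs (by simpa using not_le.1 h)
  refine ⟨hxC, fun z hz => ?_⟩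
  rw [hℓ w, hℓ z, hdist0 z hz, mul_zero, sub_zero]
  rw [inner_sub_right]
  have hkey : ⟪g, x⟫ ≤ ⟪g, w⟫ - (if ⟪g, w⟫ < 0 then ⟪g, x⟫ else 0) * gaugeDist C w := by
    by_cases h : 1 ≤ gauge C w
    · have hγpos : 0 < gauge C w := lt_of_lt_of_le one_pos h
      have hgx : ⟪g, x⟫ = (gauge C w)⁻¹ * ⟪g, w⟫ := by
        rw [hx, if_pos h, real_inner_smul_right]
      by_cases hneg : ⟪g, w⟫ < 0
      · rw [if_pos hneg, hgx]
        have hinv1 : (gauge C w)⁻¹ ≤ 1 := inv_le_one_of_one_le₀ h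
        have hinvpos : 0 < (gauge C w)⁻¹ := inv_pos.2 hγpos
        -- need: γ⁻¹⟪g,w⟫ (1 + S) ≤ ⟪g,w⟫, i.e. γ⁻¹(1+S) ≥ 1
        have hS : gauge C w - 1 ≤ gaugeDist C w := hlb
        have h1S : gauge C w ≤ 1 + gaugeDist C w := by linarith
        have : 1 ≤ (gauge C w)⁻¹ * (1 + gaugeDist C w) := by
          have := mul_le_mul_of_nonneg_left h1S hinvpos.le
          rwa [inv_mul_cancel₀ hγpos.ne'] at this
        nlinarith [this, hneg]
      · rw [if_neg hneg, hgx, zero_mul, sub_zero]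
        have hge : 0 ≤ ⟪g, w⟫ := not_lt.1 hneg
        nlinarith [inv_le_one_of_one_le₀ h]
    · rw [hx, if_neg h]
      by_cases hneg : ⟪g, w⟫ < 0
      · rw [if_pos hneg]
        have hSw : gaugeDist C w = 0 := by
          apply hdist0
          exact gauge_lt_one_subset_self hconv h0 habs (by simpa using not_le.1 h)
        rw [hSw, mul_zero, sub_zero]
      · rw [if_neg hneg, zero_mul, sub_zero]
  linarith
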